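/- arXiv:1609.01405 — 5 statements merged into one kernel-verified Lean document; each statement's English description precedes it below -/
import Mathlib

section
/- Let L be an n×n real matrix such that all off-diagonal entries of L are nonnegative, every column sum of L is nonpositive, and for every index ℓ there exists a finite sequence of indices ℓ = ℓ_0, ℓ_1, …, ℓ_k such that L_{ℓ_{m+1} ℓ_m} > 0 for all 0 ≤ m < k and the column sum of L at ℓ_k is strictly negative (i.e. ∑_h L_{h ℓ_k} < 0). Then every eigenvalue of L (viewed as a complex matrix) has strictly negative real part; in particular, L is invertible. -/
open Matrix

private lemma stmt0_eig {n : ℕ} (M : Matrix (Fin n) (Fin n) ℂ) {μ : ℂ}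
    (h : μ ∈ spectrum ℂ M) : ∃ v : Fin n → ℂ, v ≠ 0 ∧ Mᵀ *ᵥ v = μ • v := by
  rw [spectrum.mem_iff, Matrix.isUnit_iff_isUnit_det, isUnit_iff_ne_zero, not_not,
    ← Matrix.det_transpose] at h
  obtain ⟨v, hv0, hv⟩ := (Matrix.exists_mulVec_eq_zero_iff).2 h
  refine ⟨v, hv0, ?_⟩
  have : (algebraMap ℂ (Matrix (Fin n) (Fin n) ℂ) μ - M)ᵀ = μ • 1 - Mᵀ := by
    simp [Matrix.transpose_sub, Matrix.algebraMap_eq_diagonal, Matrix.diagonal_transpose,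
      Matrix.smul_one_eq_diagonal]
  rw [this, Matrix.sub_mulVec, sub_eq_zero, Matrix.smul_mulVec, Matrix.one_mulVec] at hv
  exact hv.symm


private lemma stmt0_core {n : ℕ} (L : Matrix (Fin n) (Fin n) ℝ)
    (hMetzler : ∀ i j, i ≠ j → 0 ≤ L i j)
    (hcol : ∀ j, ∑ i, L i j ≤ 0)
    (hchain : ∀ ℓ : Fin n, ∃ (k : ℕ) (c : Fin (k + 1) → Fin n),
      c 0 = ℓ ∧ (∀ m : Fin k, 0 < L (c m.succ) (c m.castSucc)) ∧
      ∑ h, L h (c (Fin.last k)) < 0)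
    (μ : ℂ) (hμre : 0 ≤ μ.re)
    (v : Fin n → ℂ) (hv0 : v ≠ 0)
    (hv : (L.map (Complex.ofReal : ℝ → ℂ))ᵀ *ᵥ v = μ • v) : False := by
  -- row equations
  have hrow : ∀ i, ∑ j, (L j i : ℂ) * v j = μ * v i := by
    intro i
    have := congrFun hv i
    simpa [Matrix.mulVec, dotProduct, Matrix.transpose_apply, Matrix.map_apply,
      Pi.smul_apply, smul_eq_mul] using this
  -- a maximizing index
  obtain ⟨i₂, hi₂⟩ := Function.ne_iff.1 hv0
  have hn : Nonempty (Fin n) := ⟨i₂⟩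
  obtain ⟨i₁, -, hi₁⟩ := Finset.exists_max_image Finset.univ (fun j => ‖v j‖)
    ⟨i₂, Finset.mem_univ i₂⟩
  set Mx : ℝ := ‖v i₁‖ with hMx
  have hMxpos : 0 < Mx := lt_of_lt_of_le (norm_pos_iff.2 hi₂) (hi₁ i₂ (Finset.mem_univ i₂))
  -- central estimate
  have central : ∀ i, ‖v i‖ = Mx →
      (∑ j ∈ Finset.univ.erase i, L j i) * Mx ≤
        ∑ j ∈ Finset.univ.erase i, L j i * ‖v j‖ ∧
      ¬ (∑ h, L h i < 0) := by
    intro i hvi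
    set A : ℝ := ∑ j ∈ Finset.univ.erase i, L j i with hA
    have hsum : A = (∑ h, L h i) - L i i := by
      rw [hA, Finset.sum_erase_eq_sub (Finset.mem_univ i)]
    have hAL : A ≤ -L i i := by
      have := hcol i; rw [hsum]; linarith
    have hsplit : (μ - (L i i : ℂ)) * v i = ∑ j ∈ Finset.univ.erase i, (L j i : ℂ) * v j := by
      rw [Finset.sum_erase_eq_sub (Finset.mem_univ i), hrow i]; ring
    have hub : ∑ j ∈ Finset.univ.erase i, L j i * ‖v j‖ ≤ A * Mx := by
      rw [hA, Finset.sum_mul]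
      refine Finset.sum_le_sum fun j hj => ?_
      have hLj : 0 ≤ L j i := hMetzler j i (Finset.ne_of_mem_erase hj)
      exact mul_le_mul_of_nonneg_left (hi₁ j (Finset.mem_univ j)) hLj
    have hnorm : ‖(μ - (L i i : ℂ)) * v i‖ ≤ ∑ j ∈ Finset.univ.erase i, L j i * ‖v j‖ := by
      rw [hsplit]
      refine (norm_sum_le _ _).trans (le_of_eq ?_)
      refine Finset.sum_congr rfl fun j hj => ?_
      have hLj : 0 ≤ L j i := hMetzler j i (Finset.ne_of_mem_erase hj)
      rw [norm_mul, Complex.norm_real, Real.norm_of_nonneg hLj]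
    have hnlb : -L i i ≤ ‖μ - (L i i : ℂ)‖ := by
      have h1 : (μ - (L i i : ℂ)).re ≤ ‖μ - (L i i : ℂ)‖ := Complex.re_le_norm _
      have h2 : (μ - (L i i : ℂ)).re = μ.re - L i i := by simp
      linarith
    have hlhs : ‖(μ - (L i i : ℂ)) * v i‖ = ‖μ - (L i i : ℂ)‖ * Mx := by
      rw [norm_mul, hvi]
    constructor
    · calc A * Mx ≤ (-L i i) * Mx := by nlinarith
        _ ≤ ‖μ - (L i i : ℂ)‖ * Mx := by nlinarith
        _ = ‖(μ - (L i i : ℂ)) * v i‖ := hlhs.symm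
        _ ≤ _ := hnorm
    · intro hneg
      have hAL' : A < -L i i := by rw [hsum]; linarith
      nlinarith [hlhs ▸ hnorm]
  -- propagation
  have key2 : ∀ i, ‖v i‖ = Mx → ∀ j, 0 < L j i → ‖v j‖ = Mx := by
    intro i hvi j hLj
    by_cases hji : j = i
    · rwa [hji]
    have h1 := (central i hvi).1
    have heq : ∑ j ∈ Finset.univ.erase i, L j i * (Mx - ‖v j‖) ≤ 0 := by
      have : ∑ j ∈ Finset.univ.erase i, L j i * (Mx - ‖v j‖)
          = (∑ j ∈ Finset.univ.erase i, L j i) * Mx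
            - ∑ j ∈ Finset.univ.erase i, L j i * ‖v j‖ := by
        rw [Finset.sum_mul, ← Finset.sum_sub_distrib]
        exact Finset.sum_congr rfl fun x _ => by ring
      rw [this]; linarith
    have hnn : ∀ x ∈ Finset.univ.erase i, 0 ≤ L x i * (Mx - ‖v x‖) := by
      intro x hx
      have := hMetzler x i (Finset.ne_of_mem_erase hx)
      have := hi₁ x (Finset.mem_univ x)
      nlinarith
    have hz : ∀ x ∈ Finset.univ.erase i, L x i * (Mx - ‖v x‖) = 0 := by
      have hsz : ∑ x ∈ Finset.univ.erase i, L x i * (Mx - ‖v x‖) = 0 :=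
        le_antisymm heq (Finset.sum_nonneg hnn)
      exact fun x hx => (Finset.sum_eq_zero_iff_of_nonneg hnn).1 hsz x hx
    have := hz j (Finset.mem_erase.2 ⟨hji, Finset.mem_univ j⟩)
    have hvjle := hi₁ j (Finset.mem_univ j)
    nlinarith
  -- chain to contradiction
  obtain ⟨k, c, hc0, hstep, hlast⟩ := hchain i₁
  have hall : ∀ m : Fin (k + 1), ‖v (c m)‖ = Mx := by
    intro m
    induction m using Fin.induction with
    | zero => rw [hc0]
    | succ m ih => exact key2 (c m.castSucc) ih (c m.succ) (hstep m)
  exact (central (c (Fin.last k)) (hall (Fin.last k))).2 hlast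

/-- If all off-diagonal entries of `L` are nonnegative, every column sum
of `L` is nonpositive, and from every index `ℓ` there is a chain of indices with positive
entries of `L` leading to an index whose column sum is strictly negative, then every
eigenvalue of `L` (as a complex matrix) has strictly negative real part; in particular
`L` is invertible. -/
theorem stmt0 {n : ℕ} (L : Matrix (Fin n) (Fin n) ℝ)
    (hMetzler : ∀ i j, i ≠ j → 0 ≤ L i j)
    (hcol : ∀ j, ∑ i, L i j ≤ 0)
    (hchain : ∀ ℓ : Fin n, ∃ (k : ℕ) (c : Fin (k + 1) → Fin n),
      c 0 = ℓ ∧ (∀ m : Fin k, 0 < L (c m.succ) (c m.castSucc)) ∧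
      ∑ h, L h (c (Fin.last k)) < 0) :
    (∀ μ ∈ spectrum ℂ (L.map (Complex.ofReal : ℝ → ℂ)), μ.re < 0) ∧ IsUnit L := by
  have hspec : ∀ μ ∈ spectrum ℂ (L.map (Complex.ofReal : ℝ → ℂ)), μ.re < 0 := by
    intro μ hμ
    by_contra hre
    push_neg at hre
    obtain ⟨v, hv0, hv⟩ := stmt0_eig _ hμ
    exact stmt0_core L hMetzler hcol hchain μ hre v hv0 hv
  refine ⟨hspec, ?_⟩
  have h0 : (0 : ℂ) ∉ spectrum ℂ (L.map (Complex.ofReal : ℝ → ℂ)) := by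
    intro h
    simpa using hspec 0 h
  rw [spectrum.zero_notMem_iff] at h0
  rw [Matrix.isUnit_iff_isUnit_det] at h0 ⊢
  rw [isUnit_iff_ne_zero] at h0 ⊢
  intro hdet
  apply h0
  have : (L.map (Complex.ofReal : ℝ → ℂ)).det = ((L.det : ℝ) : ℂ) := by
    have := RingHom.map_det Complex.ofRealHom L
    rw [RingHom.mapMatrix_apply] at this
    exact this.symm
  rw [this, hdet]; simp
end

section
/- Let L be an n×n real Metzler matrix (all off-diagonal entries nonnegative) that is Hurwitz (all complex eigenvalues have strictly negative real part). Let κ ∈ ℝⁿ be a row vector with nonnegative entries and let x ∈ ℝⁿ be a vector with nonnegative entries. Then for all 0 ≤ s ≤ t: 0 ≤ −κ·L⁻¹·exp(tL)·x ≤ −κ·L⁻¹·exp(sL)·x. In particular, taking s = 0, 0 ≤ −κ·L⁻¹·exp(tL)·x ≤ −κ·L⁻¹·x for every t ≥ 0. -/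
open Matrix Filter Topology NormedSpace

section Aux

variable {n : ℕ}

/-- entries of powers of an entrywise-nonnegative matrix are nonnegative -/
lemma aux_pow_entry_nonneg (A : Matrix (Fin n) (Fin n) ℝ) (hA : ∀ i j, 0 ≤ A i j) (k : ℕ) :
    ∀ i j, 0 ≤ (A ^ k) i j := by
  induction k with
  | zero => intro i j; by_cases h : i = j <;> simp [pow_zero, Matrix.one_apply, h]
  | succ k ih =>
      intro i j
      rw [pow_succ, Matrix.mul_apply]
      exact Finset.sum_nonneg fun l _ => mul_nonneg (ih i l) (hA l j)

lemma aux_exp_entry_nonneg (A : Matrix (Fin n) (Fin n) ℝ) (hA : ∀ i j, 0 ≤ A i j) (i j : Fin n) :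
    0 ≤ NormedSpace.exp A i j := by
  letI : SeminormedRing (Matrix (Fin n) (Fin n) ℝ) := Matrix.linftyOpSemiNormedRing
  letI : NormedRing (Matrix (Fin n) (Fin n) ℝ) := Matrix.linftyOpNormedRing
  letI : NormedAlgebra ℝ (Matrix (Fin n) (Fin n) ℝ) := Matrix.linftyOpNormedAlgebra
  have h := NormedSpace.exp_series_hasSum_exp' (𝕂 := ℝ) A
  have h2 : HasSum (fun k : ℕ => ((k.factorial : ℝ)⁻¹ • A ^ k) i j) (NormedSpace.exp A i j) := by
    have hi := (Pi.hasSum (f := fun k : ℕ => ((k.factorial : ℝ)⁻¹ • A ^ k))).mp h i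
    exact (Pi.hasSum).mp hi j
  refine hasSum_le (fun k => ?_) hasSum_zero h2
  have : ((k.factorial : ℝ)⁻¹ • A ^ k) i j = (k.factorial : ℝ)⁻¹ * (A ^ k) i j := rfl
  rw [this]
  exact mul_nonneg (by positivity) (aux_pow_entry_nonneg A hA k i j)

/-- entries of `exp (t • L)` are nonnegative for Metzler `L` and `t ≥ 0` -/
lemma aux_exp_metzler_nonneg (L : Matrix (Fin n) (Fin n) ℝ)
    (hMetzler : ∀ i j, i ≠ j → 0 ≤ L i j) {t : ℝ} (ht : 0 ≤ t) (i j : Fin n) :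
    0 ≤ NormedSpace.exp (t • L) i j := by
  classical
  set c : ℝ := ∑ l : Fin n, |L l l| with hc
  have hcL : ∀ l : Fin n, -L l l ≤ c := by
    intro l
    calc -L l l ≤ |L l l| := neg_le_abs _
    _ ≤ c := Finset.single_le_sum (f := fun l => |L l l|) (fun _ _ => abs_nonneg _)
        (Finset.mem_univ l)
  set B : Matrix (Fin n) (Fin n) ℝ := t • L + (t * c) • (1 : Matrix (Fin n) (Fin n) ℝ) with hB
  have hBnonneg : ∀ p q, 0 ≤ B p q := by
    intro p q
    by_cases hpq : p = q
    · subst hpq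
      have : B p p = t * L p p + t * c := by
        simp [hB, Matrix.add_apply, Matrix.smul_apply, Matrix.one_apply, smul_eq_mul]
      rw [this, ← mul_add]
      have := hcL p
      nlinarith
    · have : B p q = t * L p q := by
        simp [hB, Matrix.add_apply, Matrix.smul_apply, Matrix.one_apply, hpq, smul_eq_mul]
      rw [this]
      exact mul_nonneg ht (hMetzler p q hpq)
  have hsplit : t • L = B + (-(t * c)) • (1 : Matrix (Fin n) (Fin n) ℝ) := by
    simp [hB, add_assoc, ← add_smul]
  have hcomm : Commute B ((-(t * c)) • (1 : Matrix (Fin n) (Fin n) ℝ)) :=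
    (Commute.one_right B).smul_right _
  rw [hsplit, Matrix.exp_add_of_commute B _ hcomm]
  have hdiag : NormedSpace.exp ((-(t * c)) • (1 : Matrix (Fin n) (Fin n) ℝ)) =
      Matrix.diagonal (fun _ => Real.exp (-(t * c))) := by
    rw [Matrix.smul_one_eq_diagonal, Matrix.exp_diagonal, Pi.exp_def, Real.exp_eq_exp_ℝ]
  rw [hdiag, Matrix.mul_diagonal]
  exact mul_nonneg (aux_exp_entry_nonneg B hBnonneg i j) (Real.exp_pos _).le

lemma aux_exp_smul_one (c : ℂ) :
    NormedSpace.exp (c • (1 : Matrix (Fin n) (Fin n) ℂ)) =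
      Complex.exp c • (1 : Matrix (Fin n) (Fin n) ℂ) := by
  rw [Matrix.smul_one_eq_diagonal, Matrix.exp_diagonal, Pi.exp_def]
  have h1 : NormedSpace.exp c = Complex.exp c := by
    rw [← Complex.exp_eq_exp_ℂ]
  rw [h1, Matrix.smul_one_eq_diagonal]

lemma aux_tendsto_exp_mulVec (M : Matrix (Fin n) (Fin n) ℂ)
    (hspec : ∀ μ ∈ spectrum ℂ M, μ.re < 0) (v : Fin n → ℂ) :
    Tendsto (fun t : ℝ => (NormedSpace.exp (t • M)).mulVec v) atTop (𝓝 0) := by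
  classical
  letI : SeminormedRing (Matrix (Fin n) (Fin n) ℂ) := Matrix.linftyOpSemiNormedRing
  letI : NormedRing (Matrix (Fin n) (Fin n) ℂ) := Matrix.linftyOpNormedRing
  letI : NormedAlgebra ℝ (Matrix (Fin n) (Fin n) ℂ) := Matrix.linftyOpNormedAlgebra
  set S : Submodule ℂ (Fin n → ℂ) :=
    { carrier := {w | Tendsto (fun t : ℝ => (NormedSpace.exp (t • M)).mulVec w) atTop (𝓝 0)}
      add_mem' := fun {a b} ha hb => by
        simpa [Matrix.mulVec_add] using Filter.Tendsto.add ha hb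
      zero_mem' := by simp [Matrix.mulVec_zero]
      smul_mem' := fun c w hw => by
        simpa [Matrix.mulVec_smul] using Filter.Tendsto.const_smul hw c } with hS
  let f : Module.End ℂ (Fin n → ℂ) := Matrix.toLinAlgEquiv' M
  have hle : ⨆ μ : ℂ, Module.End.maxGenEigenspace f μ ≤ S := by
    apply iSup_le
    intro μ w hw
    rcases (Module.End.mem_maxGenEigenspace f μ w).mp hw with ⟨k, hk⟩
    by_cases hw0 : w = 0
    · rw [hw0]; exact S.zero_mem
    have hrelin : (f - μ • 1) ^ k
        = Matrix.toLinAlgEquiv' ((M - μ • 1) ^ k) := by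
      show ((Matrix.toLinAlgEquiv' M) - μ • 1) ^ k = _
      rw [map_pow, map_sub, _root_.map_smul, _root_.map_one]
    have hker : ((M - μ • (1 : Matrix (Fin n) (Fin n) ℂ)) ^ k).mulVec w = 0 := by
      have h := hk
      rw [hrelin] at h
      rwa [Matrix.toLinAlgEquiv'_apply] at h
    have hμ : μ.re < 0 := by
      have hkmem : w ∈ Module.End.genEigenspace f μ k :=
        Module.End.mem_genEigenspace_nat.mpr (LinearMap.mem_ker.mpr hk)
      have hgen : Module.End.HasGenEigenvalue f μ k :=
        (Submodule.ne_bot_iff _).mpr ⟨w, hkmem, hw0⟩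
      have heig := Module.End.hasEigenvalue_of_hasGenEigenvalue hgen
      have hmem := Module.End.hasEigenvalue_iff_mem_spectrum.mp heig
      have hsp : spectrum ℂ f = spectrum ℂ M := AlgEquiv.spectrum_eq (Matrix.toLinAlgEquiv') M
      rw [hsp] at hmem
      exact hspec μ hmem
    set N : Matrix (Fin n) (Fin n) ℂ := M - μ • 1 with hNdef
    have hNv : ∀ m : ℕ, k ≤ m → (N ^ m).mulVec w = 0 := by
      intro m hm
      obtain ⟨d, rfl⟩ := Nat.exists_eq_add_of_le hm
      rw [add_comm, pow_add, ← Matrix.mulVec_mulVec, hker, Matrix.mulVec_zero]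
    have hexp : ∀ t : ℝ, NormedSpace.exp (t • M)
        = Complex.exp (t * μ) • NormedSpace.exp (t • N) := by
      intro t
      have h1 : t • M = t • N + ((t : ℂ) * μ) • (1 : Matrix (Fin n) (Fin n) ℂ) := by
        have h2 : ((t : ℂ) * μ) • (1 : Matrix (Fin n) (Fin n) ℂ)
            = t • μ • (1 : Matrix (Fin n) (Fin n) ℂ) := by
          rw [mul_smul]
          exact algebraMap_smul ℂ t (μ • (1 : Matrix (Fin n) (Fin n) ℂ))
        rw [h2, hNdef, smul_sub, sub_add_cancel]
      rw [h1, Matrix.exp_add_of_commute _ _ ((Commute.one_right _).smul_right _),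
        aux_exp_smul_one, mul_smul_comm, mul_one]
    have hfin : ∀ t : ℝ, (NormedSpace.exp (t • N)).mulVec w =
        ∑ j ∈ Finset.range k, ((j.factorial : ℝ)⁻¹ * t ^ j) • (N ^ j).mulVec w := by
      intro t
      have hsum := NormedSpace.exp_series_hasSum_exp' (𝕂 := ℝ) (t • N)
      let ψ : Matrix (Fin n) (Fin n) ℂ →ₗ[ℝ] (Fin n → ℂ) :=
        { toFun := fun A => A.mulVec w
          map_add' := fun A B => Matrix.add_mulVec A B w
          map_smul' := fun r A => Matrix.smul_mulVec r A w }
      have hcont : Continuous ψ := ψ.continuous_of_finiteDimensional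
      have h2 := hsum.map ψ.toAddMonoidHom hcont
      have h3 : HasSum (fun j : ℕ => ((j.factorial : ℝ)⁻¹ * t ^ j) • (N ^ j).mulVec w)
          ((NormedSpace.exp (t • N)).mulVec w) := by
        refine h2.congr_fun fun j => ?_
        show ((j.factorial : ℝ)⁻¹ * t ^ j) • (N ^ j).mulVec w
          = (((j.factorial : ℝ)⁻¹ • (t • N) ^ j).mulVec w)
        rw [smul_pow, smul_smul, Matrix.smul_mulVec]
      have h4 : HasSum (fun j : ℕ => ((j.factorial : ℝ)⁻¹ * t ^ j) • (N ^ j).mulVec w)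
          (∑ j ∈ Finset.range k, ((j.factorial : ℝ)⁻¹ * t ^ j) • (N ^ j).mulVec w) := by
        apply hasSum_sum_of_ne_finset_zero
        intro m hm
        rw [hNv m (by simpa using hm), smul_zero]
      exact h3.unique h4
    show Tendsto (fun t : ℝ => (NormedSpace.exp (t • M)).mulVec w) atTop (𝓝 0)
    have heq : (fun t : ℝ => (NormedSpace.exp (t • M)).mulVec w)
        = fun t : ℝ => ∑ j ∈ Finset.range k,
            (Complex.exp (t * μ) * (((j.factorial : ℝ)⁻¹ * t ^ j : ℝ) : ℂ)) • (N ^ j).mulVec w := by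
      funext t
      rw [hexp t, Matrix.smul_mulVec, hfin t, Finset.smul_sum]
      refine Finset.sum_congr rfl fun j _ => ?_
      have hcast : (((j.factorial : ℝ)⁻¹ * t ^ j) • (N ^ j).mulVec w)
          = ((((j.factorial : ℝ)⁻¹ * t ^ j : ℝ) : ℂ)) • (N ^ j).mulVec w :=
        (algebraMap_smul ℂ ((j.factorial : ℝ)⁻¹ * t ^ j) ((N ^ j).mulVec w)).symm
      rw [hcast, smul_smul]
    rw [heq]
    rw [show (0 : Fin n → ℂ) = ∑ j ∈ Finset.range k, (0 : Fin n → ℂ) by simp]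
    apply tendsto_finset_sum
    intro j _
    have hb : 0 < -μ.re := by linarith
    have hbase : Tendsto (fun t : ℝ => t ^ j * Real.exp (t * μ.re)) atTop (𝓝 0) := by
      have h1 : Tendsto (fun t : ℝ => (-μ.re) * t) atTop atTop :=
        Tendsto.const_mul_atTop hb tendsto_id
      have h2 := (Real.tendsto_pow_mul_exp_neg_atTop_nhds_zero j).comp h1
      have h3 := h2.const_mul (((-μ.re) ^ j)⁻¹)
      rw [mul_zero] at h3
      refine h3.congr fun t => ?_
      have hc : ((-μ.re) ^ j : ℝ) ≠ 0 := pow_ne_zero _ hb.ne'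
      simp only [Function.comp_apply]
      rw [mul_pow, show -(-μ.re * t) = t * μ.re by ring]
      field_simp
    have hsc : Tendsto
        (fun t : ℝ => Complex.exp (t * μ) * (((j.factorial : ℝ)⁻¹ * t ^ j : ℝ) : ℂ))
        atTop (𝓝 0) := by
      rw [tendsto_zero_iff_norm_tendsto_zero]
      have hrhs : Tendsto (fun t : ℝ => (j.factorial : ℝ)⁻¹ * (t ^ j * Real.exp (t * μ.re)))
          atTop (𝓝 0) := by
        have := hbase.const_mul ((j.factorial : ℝ)⁻¹)
        rwa [mul_zero] at this
      apply squeeze_zero' (Filter.Eventually.of_forall fun t => norm_nonneg _) _ hrhs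
      filter_upwards [eventually_ge_atTop (0 : ℝ)] with t ht
      rw [norm_mul, Complex.norm_exp, Complex.norm_real]
      have h5 : ((t : ℂ) * μ).re = t * μ.re := by
        simp [Complex.mul_re]
      rw [h5, Real.norm_eq_abs, abs_of_nonneg (by positivity)]
      apply le_of_eq; ring
    simpa using hsc.smul_const ((N ^ j).mulVec w)
  have htop := Module.End.iSup_maxGenEigenspace_eq_top (K := ℂ) (V := Fin n → ℂ) f
  exact hle (htop.symm ▸ Submodule.mem_top : v ∈ _)

end Aux

/-- For a Metzler, Hurwitz matrix `L`, a nonnegative row vector `κ` and a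
nonnegative vector `x`, the quantity `-κ ⬝ L⁻¹ ⬝ exp (t • L) ⬝ x` is nonnegative and
nonincreasing in `t ≥ 0`; in particular it is bounded above by `-κ ⬝ L⁻¹ ⬝ x`. -/
theorem stmt6 {n : ℕ} (L : Matrix (Fin n) (Fin n) ℝ)
    (hMetzler : ∀ i j, i ≠ j → 0 ≤ L i j)
    (hHurwitz : ∀ μ ∈ spectrum ℂ (L.map (Complex.ofReal : ℝ → ℂ)), μ.re < 0)
    (κ : Fin n → ℝ) (hκ : ∀ i, 0 ≤ κ i)
    (x : Fin n → ℝ) (hx : ∀ i, 0 ≤ x i) :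
    (∀ s t : ℝ, 0 ≤ s → s ≤ t →
        0 ≤ -(κ ⬝ᵥ (L⁻¹ * NormedSpace.exp (t • L)).mulVec x) ∧
        -(κ ⬝ᵥ (L⁻¹ * NormedSpace.exp (t • L)).mulVec x) ≤
          -(κ ⬝ᵥ (L⁻¹ * NormedSpace.exp (s • L)).mulVec x)) ∧
    (∀ t : ℝ, 0 ≤ t →
        -(κ ⬝ᵥ (L⁻¹ * NormedSpace.exp (t • L)).mulVec x) ≤ -(κ ⬝ᵥ L⁻¹.mulVec x)) := by
  classical
  have hdet : IsUnit L.det := by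
    by_contra hdetn
    have hdet0 : L.det = 0 := by
      by_contra h0
      exact hdetn (isUnit_iff_ne_zero.mpr h0)
    have h0 : (0 : ℂ) ∈ spectrum ℂ (L.map (Complex.ofReal : ℝ → ℂ)) := by
      rw [spectrum.zero_mem_iff, Matrix.isUnit_iff_isUnit_det]
      have hd : (L.map (Complex.ofReal : ℝ → ℂ)).det = ((L.det : ℝ) : ℂ) :=
        (RingHom.map_det Complex.ofRealHom L).symm
      rw [hd, hdet0]
      simp
    simpa using hHurwitz 0 h0
  set g : ℝ → ℝ := fun t => κ ⬝ᵥ (L⁻¹ * NormedSpace.exp (t • L)).mulVec x with hgdef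
  letI : SeminormedRing (Matrix (Fin n) (Fin n) ℝ) := Matrix.linftyOpSemiNormedRing
  letI : NormedRing (Matrix (Fin n) (Fin n) ℝ) := Matrix.linftyOpNormedRing
  letI : NormedAlgebra ℝ (Matrix (Fin n) (Fin n) ℝ) := Matrix.linftyOpNormedAlgebra
  let φ : Matrix (Fin n) (Fin n) ℝ →ₗ[ℝ] ℝ :=
    { toFun := fun A => κ ⬝ᵥ (L⁻¹ * A).mulVec x
      map_add' := fun A B => by
        simp only [mul_add, Matrix.add_mulVec, dotProduct_add]
      map_smul' := fun r A => by
        simp only [Matrix.mul_smul, Matrix.smul_mulVec, dotProduct_smul, smul_eq_mul,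
          RingHom.id_apply] }
  have hderiv : ∀ t : ℝ, HasDerivAt g (κ ⬝ᵥ (NormedSpace.exp (t • L)).mulVec x) t := by
    intro t
    have h1 : HasDerivAt (fun u : ℝ => NormedSpace.exp (u • L))
        (NormedSpace.exp (t • L) * L) t := hasDerivAt_exp_smul_const L t
    have h2 := ((LinearMap.toContinuousLinearMap φ).hasFDerivAt
      (x := NormedSpace.exp (t • L))).comp_hasDerivAt t h1
    have h3 : (⇑(LinearMap.toContinuousLinearMap φ) ∘ fun u : ℝ => NormedSpace.exp (u • L))
        = g := by
      funext u
      show φ (NormedSpace.exp (u • L)) = g u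
      rfl
    have h4 : (LinearMap.toContinuousLinearMap φ) (NormedSpace.exp (t • L) * L)
        = κ ⬝ᵥ (NormedSpace.exp (t • L)).mulVec x := by
      show κ ⬝ᵥ (L⁻¹ * (NormedSpace.exp (t • L) * L)).mulVec x = _
      have hcommL : NormedSpace.exp (t • L) * L = L * NormedSpace.exp (t • L) :=
        (Commute.exp_left ((Commute.refl L).smul_left t)).eq
      rw [hcommL, ← mul_assoc, Matrix.nonsing_inv_mul L hdet, one_mul]
    rw [← h3, ← h4]
    exact h2
  have hmono : MonotoneOn g (Set.Ici (0 : ℝ)) := by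
    apply monotoneOn_of_deriv_nonneg (convex_Ici 0)
    · exact fun t _ => (hderiv t).continuousAt.continuousWithinAt
    · exact fun t _ => (hderiv t).differentiableAt.differentiableWithinAt
    · intro t ht
      rw [(hderiv t).deriv]
      have ht' : (0 : ℝ) ≤ t := le_of_lt (by simpa [interior_Ici] using ht)
      refine Finset.sum_nonneg fun i _ => mul_nonneg (hκ i) ?_
      show (0:ℝ) ≤ ∑ l : Fin n, NormedSpace.exp (t • L) i l * x l
      exact Finset.sum_nonneg fun l _ =>
        mul_nonneg (aux_exp_metzler_nonneg L hMetzler ht' i l) (hx l)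
  letI : SeminormedRing (Matrix (Fin n) (Fin n) ℂ) := Matrix.linftyOpSemiNormedRing
  letI : NormedRing (Matrix (Fin n) (Fin n) ℂ) := Matrix.linftyOpNormedRing
  letI : NormedAlgebra ℝ (Matrix (Fin n) (Fin n) ℂ) := Matrix.linftyOpNormedAlgebra
  have hmapexp : ∀ t : ℝ, (NormedSpace.exp (t • L)).map (Complex.ofReal : ℝ → ℂ)
      = NormedSpace.exp (t • L.map (Complex.ofReal : ℝ → ℂ)) := by
    intro t
    have hcont : Continuous (Complex.ofRealHom.mapMatrix :
        Matrix (Fin n) (Fin n) ℝ →+* Matrix (Fin n) (Fin n) ℂ) := by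
      show Continuous fun A : Matrix (Fin n) (Fin n) ℝ => A.map Complex.ofReal
      exact continuous_matrix fun i j =>
        Complex.continuous_ofReal.comp ((continuous_apply j).comp (continuous_apply i))
    have hme := NormedSpace.map_exp_of_mem_ball (𝕂 := ℝ)
      (Complex.ofRealHom.mapMatrix : Matrix (Fin n) (Fin n) ℝ →+* Matrix (Fin n) (Fin n) ℂ)
      hcont (t • L) ((NormedSpace.expSeries_radius_eq_top ℝ (Matrix (Fin n) (Fin n) ℝ)).symm ▸ edist_lt_top _ _)
    have hsm : (Complex.ofRealHom.mapMatrix (t • L) : Matrix (Fin n) (Fin n) ℂ)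
        = t • L.map (Complex.ofReal : ℝ → ℂ) := by
      ext i j
      simp [RingHom.mapMatrix_apply, Matrix.map_apply, Matrix.smul_apply, Complex.real_smul]
    rw [hsm] at hme
    exact hme
  have htendvec : Tendsto (fun t : ℝ => (NormedSpace.exp (t • L)).mulVec x) atTop (𝓝 0) := by
    have hC := aux_tendsto_exp_mulVec (L.map (Complex.ofReal : ℝ → ℂ)) hHurwitz
      (fun i => (x i : ℂ))
    rw [tendsto_pi_nhds]
    intro i
    have h1 : Tendsto (fun t : ℝ =>
        ((NormedSpace.exp (t • L.map (Complex.ofReal : ℝ → ℂ))).mulVec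
          (fun i => (x i : ℂ))) i) atTop (𝓝 0) := by
      have := ((continuous_apply i).tendsto (0 : Fin n → ℂ)).comp hC
      simpa [Function.comp_def] using this
    have h2 : ∀ t : ℝ, ((NormedSpace.exp (t • L.map (Complex.ofReal : ℝ → ℂ))).mulVec
        (fun i => (x i : ℂ))) i = (((NormedSpace.exp (t • L)).mulVec x) i : ℝ) := by
      intro t
      rw [← hmapexp t]
      exact (RingHom.map_mulVec Complex.ofRealHom (NormedSpace.exp (t • L)) x i).symm
    have h3 : Tendsto (fun t : ℝ => ((((NormedSpace.exp (t • L)).mulVec x) i : ℝ) : ℂ))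
        atTop (𝓝 0) := by
      refine h1.congr fun t => ?_
      rw [h2 t]
    have h4 := (Complex.continuous_re.tendsto 0).comp h3
    simpa [Function.comp_def] using h4
  have htendg : Tendsto g atTop (𝓝 0) := by
    let ζ : (Fin n → ℝ) →ₗ[ℝ] ℝ :=
      { toFun := fun y => κ ⬝ᵥ L⁻¹.mulVec y
        map_add' := fun a b => by
          simp only [Matrix.mulVec_add, dotProduct_add]
        map_smul' := fun r a => by
          simp only [Matrix.mulVec_smul, dotProduct_smul, smul_eq_mul, RingHom.id_apply] }
    have hζ : Continuous ζ := ζ.continuous_of_finiteDimensional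
    have hcomp := (hζ.tendsto 0).comp htendvec
    rw [show ζ 0 = 0 from map_zero ζ] at hcomp
    refine hcomp.congr fun t => ?_
    show κ ⬝ᵥ L⁻¹.mulVec ((NormedSpace.exp (t • L)).mulVec x) = g t
    rw [Matrix.mulVec_mulVec]
  have hg_nonpos : ∀ t : ℝ, 0 ≤ t → g t ≤ 0 := by
    intro t ht
    refine ge_of_tendsto htendg ?_
    filter_upwards [eventually_ge_atTop t] with u hu
    exact hmono (Set.mem_Ici.mpr ht) (Set.mem_Ici.mpr (ht.trans hu)) hu
  have hg0 : g 0 = κ ⬝ᵥ L⁻¹.mulVec x := by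
    show κ ⬝ᵥ (L⁻¹ * NormedSpace.exp ((0 : ℝ) • L)).mulVec x = _
    rw [zero_smul, NormedSpace.exp_zero, mul_one]
  refine ⟨fun s t hs hst => ⟨?_, ?_⟩, fun t ht => ?_⟩
  · simpa using neg_nonneg.mpr (hg_nonpos t (hs.trans hst))
  · exact neg_le_neg (hmono (Set.mem_Ici.mpr hs) (Set.mem_Ici.mpr (hs.trans hst)) hst)
  · have h := hmono (Set.mem_Ici.mpr le_rfl) (Set.mem_Ici.mpr ht) ht
    rw [hg0] at h
    exact neg_le_neg h
end

section
/- Let L be an n×n real Metzler matrix (all off-diagonal entries nonnegative) with all column sums nonpositive, and suppose every eigenvalue of L (viewed as a complex matrix) has strictly negative real part. Let κ ∈ ℝⁿ be a row vector with 0 ≤ κ_ℓ ≤ −(∑_h L_{hℓ}) for every index ℓ. Then the row vector −κ·L⁻¹ satisfies −κ·L⁻¹ ≤ e^⊤ entrywise, where e is the all-ones vector. -/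
open Matrix

/-- Max-argument lemma: if `M` is Metzler with strictly negative column sums and
`y ᵥ* M ≥ 0` entrywise, then `y ≤ 0` entrywise. -/
lemma metzler_strict_neg {n : ℕ} (M : Matrix (Fin n) (Fin n) ℝ)
    (hM : ∀ i j, i ≠ j → 0 ≤ M i j) (hc : ∀ j, ∑ i, M i j < 0)
    (y : Fin n → ℝ) (hy : ∀ j, 0 ≤ (y ᵥ* M) j) : ∀ j, y j ≤ 0 := by
  intro j
  by_contra hpos
  push_neg at hpos
  have : Nonempty (Fin n) := ⟨j⟩
  obtain ⟨k, hk⟩ := Finite.exists_max y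
  have hyk : 0 < y k := lt_of_lt_of_le hpos (hk j)
  have h1 : (y ᵥ* M) k ≤ y k * ∑ i, M i k := by
    rw [Finset.mul_sum]
    simp only [Matrix.vecMul, dotProduct]
    refine Finset.sum_le_sum fun i _ => ?_
    rcases eq_or_ne i k with rfl | hik
    · exact le_rfl
    · exact mul_le_mul_of_nonneg_right (hk i) (hM i k hik)
  have h2 : y k * ∑ i, M i k < 0 := mul_neg_of_pos_of_neg hyk (hc k)
  exact absurd (hy k) (not_le.mpr (lt_of_le_of_lt h1 h2))

/-- Strictly column-dominant Metzler matrices have nonzero determinant. -/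
lemma metzler_det_ne_zero {n : ℕ} (M : Matrix (Fin n) (Fin n) ℝ)
    (hM : ∀ i j, i ≠ j → 0 ≤ M i j) (hc : ∀ j, ∑ i, M i j < 0) : M.det ≠ 0 := by
  apply det_ne_zero_of_sum_col_lt_diag
  intro k
  have hoff : (0:ℝ) ≤ ∑ i ∈ Finset.univ.erase k, M i k :=
    Finset.sum_nonneg fun i hi => hM i k (Finset.ne_of_mem_erase hi)
  have hsplit : M k k + ∑ i ∈ Finset.univ.erase k, M i k = ∑ i, M i k :=
    Finset.add_sum_erase _ (fun i => M i k) (Finset.mem_univ k)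
  have hck := hc k
  have hdiag : M k k < 0 := by linarith
  calc ∑ i ∈ Finset.univ.erase k, ‖M i k‖ = ∑ i ∈ Finset.univ.erase k, M i k :=
        Finset.sum_congr rfl fun i hi =>
          Real.norm_of_nonneg (hM i k (Finset.ne_of_mem_erase hi))
    _ < ‖M k k‖ := by rw [Real.norm_eq_abs, abs_of_neg hdiag]; linarith

/-- Let `L` be Metzler with nonpositive column sums and Hurwitz, and let
`κ` be a row vector with `0 ≤ κ ℓ ≤ -(∑ h, L h ℓ)` for all `ℓ`. Then the row vector
`-κ ⬝ L⁻¹` is entrywise at most the all-ones row vector. -/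
theorem stmt11 {n : ℕ} (L : Matrix (Fin n) (Fin n) ℝ)
    (hMetzler : ∀ i j, i ≠ j → 0 ≤ L i j)
    (hcol : ∀ j, ∑ i, L i j ≤ 0)
    (hHurwitz : ∀ μ ∈ spectrum ℂ (L.map (Complex.ofReal : ℝ → ℂ)), μ.re < 0)
    (κ : Fin n → ℝ) (hκ : ∀ ℓ, 0 ≤ κ ℓ ∧ κ ℓ ≤ -∑ h, L h ℓ) :
    ∀ j, -(κ ᵥ* L⁻¹) j ≤ 1 := by
  intro j
  have hdetL : L.det ≠ 0 := by
    intro h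
    have h0 : (0 : ℂ) ∈ spectrum ℂ (L.map (Complex.ofReal : ℝ → ℂ)) := by
      rw [spectrum.zero_mem_iff, Matrix.isUnit_iff_isUnit_det]
      have hd : (L.map (Complex.ofReal : ℝ → ℂ)).det = (L.det : ℂ) :=
        (RingHom.map_det Complex.ofRealHom L).symm
      rw [hd, h]
      simp
    simpa using hHurwitz 0 h0
  set F : ℝ → ℝ := fun ε => -(κ ᵥ* (L - ε • 1)⁻¹) j with hF
  have hsum : ∀ (ε : ℝ) (j' : Fin n),
      ∑ i, (L - ε • (1 : Matrix (Fin n) (Fin n) ℝ)) i j' = (∑ i, L i j') - ε := by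
    intro ε j'
    simp [Matrix.sub_apply, Matrix.smul_apply, Matrix.one_apply, smul_eq_mul,
      Finset.sum_sub_distrib, mul_ite, mul_one, mul_zero, Finset.sum_ite_eq']
  have hbound : ∀ ε ∈ Set.Ioi (0:ℝ), F ε ≤ 1 := by
    intro ε hε
    rw [Set.mem_Ioi] at hε
    set M := L - ε • (1 : Matrix (Fin n) (Fin n) ℝ) with hMdef
    have hMoff : ∀ i j', i ≠ j' → 0 ≤ M i j' := by
      intro i j' hij
      simpa [hMdef, Matrix.one_apply_ne hij] using hMetzler i j' hij
    have hMc : ∀ j', ∑ i, M i j' < 0 := by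
      intro j'
      rw [hMdef, hsum ε j']
      have := hcol j'
      linarith
    have hdet : M.det ≠ 0 := metzler_det_ne_zero M hMoff hMc
    have hinv : M⁻¹ * M = 1 := Matrix.nonsing_inv_mul M (isUnit_iff_ne_zero.mpr hdet)
    set y : Fin n → ℝ := -(κ ᵥ* M⁻¹) with hy
    set z : Fin n → ℝ := y - (fun _ => 1) with hz
    have h1 : y ᵥ* M = -κ := by
      rw [hy, Matrix.neg_vecMul, Matrix.vecMul_vecMul, hinv, Matrix.vecMul_one]
    have hzM : ∀ j', 0 ≤ (z ᵥ* M) j' := by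
      intro j'
      have h2 : ((fun _ : Fin n => (1:ℝ)) ᵥ* M) j' = ∑ i, M i j' := by
        simp [Matrix.vecMul, dotProduct]
      have h3 : (z ᵥ* M) j' = -κ j' - ∑ i, M i j' := by
        rw [hz, Matrix.sub_vecMul, Pi.sub_apply, h1, h2, Pi.neg_apply]
      rw [h3]
      have h4 := (hκ j').2
      have h5 : ∑ i, M i j' = (∑ i, L i j') - ε := by rw [hMdef, hsum ε j']
      linarith
    have hzj : z j ≤ 0 := metzler_strict_neg M hMoff hMc z hzM j
    have : y j - 1 ≤ 0 := by simpa [hz] using hzj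
    have hyj : y j ≤ 1 := by linarith
    simpa [hF, hy, hMdef] using hyj
  have hA : Continuous fun ε : ℝ => L - ε • (1 : Matrix (Fin n) (Fin n) ℝ) :=
    continuous_const.sub (continuous_id.smul continuous_const)
  have hdet0 : (L - (0:ℝ) • (1 : Matrix (Fin n) (Fin n) ℝ)).det ≠ 0 := by
    simpa using hdetL
  have hinvc : ContinuousAt (fun ε : ℝ => (L - ε • (1 : Matrix (Fin n) (Fin n) ℝ))⁻¹) 0 := by
    refine ContinuousAt.comp (continuousAt_matrix_inv _ ?_) hA.continuousAt
    rw [Ring.inverse_eq_inv']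
    exact continuousAt_inv₀ hdet0
  have hcont : ContinuousAt F 0 := by
    apply ContinuousAt.neg
    have : ∀ ε : ℝ, (κ ᵥ* (L - ε • (1 : Matrix (Fin n) (Fin n) ℝ))⁻¹) j
        = ∑ i, κ i * ((L - ε • (1 : Matrix (Fin n) (Fin n) ℝ))⁻¹) i j := by
      intro ε; simp [Matrix.vecMul, dotProduct]
    simp only [this]
    refine tendsto_finset_sum _ fun i _ => ?_
    refine continuousAt_const.mul ?_
    have h6 := (((continuous_apply j).comp (continuous_apply i)).continuousAt).comp hinvc
    exact h6
  have htend : Filter.Tendsto F (nhdsWithin 0 (Set.Ioi 0)) (nhds (F 0)) :=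
    hcont.continuousWithinAt.tendsto
  have hle : F 0 ≤ 1 :=
    le_of_tendsto htend (Filter.eventually_of_mem self_mem_nhdsWithin hbound)
  simpa [hF] using hle
end

section
/- For each N ∈ ℕ, let L_N be an n×n real Metzler matrix (all off-diagonal entries nonnegative) with all column sums nonpositive, such that every eigenvalue of L_N (viewed as a complex matrix) has strictly negative real part. Fix an index ℓ and a real number b, and suppose that lim_{N→∞} (−N^{2b} · e^⊤·L_N⁻¹·e_ℓ) = 0, where e is the all-ones vector and e_ℓ the ℓ-th standard basis vector. Then for every ε > 0 and every index ℓ', lim_{N→∞} N^b · (exp(N^{−b}·ε·L_N))_{ℓ'ℓ} = 0. -/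
open Matrix Filter

section Stmt12AuxSection
open NormedSpace

namespace Stmt12Aux

variable {n : ℕ}

/-- Entry evaluation as a continuous linear map. -/
noncomputable def entryCLM (i j : Fin n) : Matrix (Fin n) (Fin n) ℝ →L[ℝ] ℝ :=
  { toLinearMap :=
      { toFun := fun M => M i j
        map_add' := fun _ _ => rfl
        map_smul' := fun _ _ => rfl }
    cont := (continuous_apply j).comp (continuous_apply i) }

@[simp] lemma entryCLM_apply (i j : Fin n) (M : Matrix (Fin n) (Fin n) ℝ) :
    entryCLM i j M = M i j := rfl

/-- Weighted column-sum functional `M ↦ ∑ i, (W * M) i ℓ` as a CLM. -/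
noncomputable def weightCLM (W : Matrix (Fin n) (Fin n) ℝ) (ℓ : Fin n) :
    Matrix (Fin n) (Fin n) ℝ →L[ℝ] ℝ :=
  ∑ i, ∑ k, W i k • entryCLM k ℓ

lemma weightCLM_apply (W : Matrix (Fin n) (Fin n) ℝ) (ℓ : Fin n)
    (M : Matrix (Fin n) (Fin n) ℝ) :
    weightCLM W ℓ M = ∑ i, (W * M) i ℓ := by
  simp [weightCLM, Matrix.mul_apply, ContinuousLinearMap.sum_apply, smul_eq_mul]

lemma pow_entry_nonneg {M : Matrix (Fin n) (Fin n) ℝ} (h : ∀ i j, 0 ≤ M i j) :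
    ∀ (k : ℕ) (i j : Fin n), 0 ≤ (M ^ k) i j := by
  intro k
  induction k with
  | zero =>
    intro i j
    rw [pow_zero, Matrix.one_apply]
    split <;> norm_num
  | succ k ih =>
    intro i j
    rw [pow_succ, Matrix.mul_apply]
    exact Finset.sum_nonneg fun k' _ => mul_nonneg (ih i k') (h k' j)

lemma exp_entry_nonneg {M : Matrix (Fin n) (Fin n) ℝ} (h : ∀ i j, 0 ≤ M i j)
    (i j : Fin n) : 0 ≤ exp M i j := by
  letI : SeminormedRing (Matrix (Fin n) (Fin n) ℝ) := Matrix.linftyOpSemiNormedRing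
  letI : NormedRing (Matrix (Fin n) (Fin n) ℝ) := Matrix.linftyOpNormedRing
  letI : NormedAlgebra ℝ (Matrix (Fin n) (Fin n) ℝ) := Matrix.linftyOpNormedAlgebra
  have hs : HasSum (fun k : ℕ => ((Nat.factorial k : ℝ)⁻¹) • M ^ k) (exp M) := by
    rw [exp_eq_tsum ℝ]
    exact (expSeries_summable' (𝕂 := ℝ) M).hasSum
  have h2 := hs.mapL (entryCLM i j)
  have h3 : exp M i j = ∑' k : ℕ, (entryCLM i j) ((Nat.factorial k : ℝ)⁻¹ • M ^ k) :=
    (h2.tsum_eq).symm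
  rw [h3]
  refine tsum_nonneg fun k => ?_
  simp only [entryCLM_apply, Matrix.smul_apply, smul_eq_mul]
  exact mul_nonneg (by positivity) (pow_entry_nonneg h k i j)


lemma exp_smul_entry_nonneg {A : Matrix (Fin n) (Fin n) ℝ}
    (hMz : ∀ i j, i ≠ j → 0 ≤ A i j) {t : ℝ} (ht : 0 ≤ t) (i j : Fin n) :
    0 ≤ exp (t • A) i j := by
  letI : SeminormedRing (Matrix (Fin n) (Fin n) ℝ) := Matrix.linftyOpSemiNormedRing
  letI : NormedRing (Matrix (Fin n) (Fin n) ℝ) := Matrix.linftyOpNormedRing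
  letI : NormedAlgebra ℝ (Matrix (Fin n) (Fin n) ℝ) := Matrix.linftyOpNormedAlgebra
  set c : ℝ := t * ∑ k, |A k k| with hc
  have hc0 : 0 ≤ c := mul_nonneg ht (Finset.sum_nonneg fun _ _ => abs_nonneg _)
  have hB : ∀ i j, 0 ≤ (t • A + c • (1 : Matrix (Fin n) (Fin n) ℝ)) i j := by
    intro i j
    by_cases hij : i = j
    · subst hij
      simp only [Matrix.add_apply, Matrix.smul_apply, Matrix.one_apply_eq, smul_eq_mul, mul_one]
      have h1 : t * |A i i| ≤ c := by
        rw [hc]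
        refine mul_le_mul_of_nonneg_left ?_ ht
        exact Finset.single_le_sum (fun k _ => abs_nonneg (A k k)) (Finset.mem_univ i)
      nlinarith [neg_abs_le (A i i), mul_le_mul_of_nonneg_left (neg_abs_le (A i i)) ht]
    · simp only [Matrix.add_apply, Matrix.smul_apply, Matrix.one_apply_ne hij, smul_eq_mul,
        mul_zero, add_zero]
      exact mul_nonneg ht (hMz i j hij)
  have key : exp (t • A) =
      exp (t • A + c • (1 : Matrix (Fin n) (Fin n) ℝ)) * (Real.exp (-c) • 1) := by
    have hsplit : t • A = (t • A + c • (1 : Matrix (Fin n) (Fin n) ℝ)) + (-c) • 1 := by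
      rw [neg_smul]; abel
    have hcomm : Commute (t • A + c • (1 : Matrix (Fin n) (Fin n) ℝ))
        ((-c) • (1 : Matrix (Fin n) (Fin n) ℝ)) :=
      ((Commute.one_right _).smul_right (-c))
    have hexpc : exp ((-c) • (1 : Matrix (Fin n) (Fin n) ℝ))
        = Real.exp (-c) • (1 : Matrix (Fin n) (Fin n) ℝ) := by
      have h1 : ((-c) • (1 : Matrix (Fin n) (Fin n) ℝ)) = algebraMap ℝ _ (-c) :=
        (Algebra.algebraMap_eq_smul_one _).symm
      rw [h1]; erw [← algebraMap_exp_comm (𝕂 := ℝ) (𝔸 := Matrix (Fin n) (Fin n) ℝ)]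
      rw [Algebra.algebraMap_eq_smul_one, ← Real.exp_eq_exp_ℝ]
    conv_lhs => rw [hsplit]
    rw [Matrix.exp_add_of_commute _ _ hcomm, hexpc]
  rw [key]
  have := exp_entry_nonneg hB
  simp only [Matrix.mul_smul, Matrix.mul_one, Matrix.smul_apply, smul_eq_mul]
  exact mul_nonneg (Real.exp_nonneg _) (this i j)

lemma hasDerivAt_weight (A W : Matrix (Fin n) (Fin n) ℝ) (j : Fin n) (t : ℝ) :
    HasDerivAt (fun s : ℝ => ∑ i, (W * exp (s • A)) i j)
      (∑ i, (W * A * exp (t • A)) i j) t := by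
  letI : SeminormedRing (Matrix (Fin n) (Fin n) ℝ) := Matrix.linftyOpSemiNormedRing
  letI : NormedRing (Matrix (Fin n) (Fin n) ℝ) := Matrix.linftyOpNormedRing
  letI : NormedAlgebra ℝ (Matrix (Fin n) (Fin n) ℝ) := Matrix.linftyOpNormedAlgebra
  have hd : HasDerivAt (fun u : ℝ => exp (u • A)) (A * exp (t • A)) t :=
    hasDerivAt_exp_smul_const' A t
  have h2 := (weightCLM W j).hasFDerivAt.comp_hasDerivAt t hd
  have e2 : weightCLM W j (A * exp (t • A)) = ∑ i, (W * A * exp (t • A)) i j := by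
    rw [weightCLM_apply]
    simp_rw [Matrix.mul_assoc]
  have h2' : HasDerivAt (fun s : ℝ => ∑ i, (W * exp (s • A)) i j)
      (weightCLM W j (A * exp (t • A))) t := by
    have e1 : (fun s : ℝ => ∑ i, (W * exp (s • A)) i j)
        = ⇑(weightCLM W j) ∘ (fun u : ℝ => exp (u • A)) := by
      funext s; simp [Function.comp, weightCLM_apply]
    rw [e1]; exact h2
  rw [e2] at h2'
  exact h2'


lemma key (A : Matrix (Fin n) (Fin n) ℝ)
    (hMz : ∀ i j, i ≠ j → 0 ≤ A i j) (hcs : ∀ j, ∑ i, A i j ≤ 0)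
    (hdet : IsUnit A.det) (ℓ : Fin n) {t : ℝ} (ht : 0 < t) (ℓ' : Fin n) :
    exp (t • A) ℓ' ℓ ≤ (-(∑ i, A⁻¹ i ℓ)) / t := by
  set E : ℝ → Matrix (Fin n) (Fin n) ℝ := fun s => exp (s • A) with hE
  have hE0 : E 0 = 1 := by simp [hE]
  have hEnn : ∀ s, 0 ≤ s → ∀ i j, 0 ≤ E s i j := fun s hs i j =>
    exp_smul_entry_nonneg hMz hs i j
  -- the column sum functions
  set f : Fin n → ℝ → ℝ := fun j s => ∑ i, E s i j with hf
  have hf_deriv : ∀ j t, HasDerivAt (f j) (∑ i, (A * E t) i j) t := by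
    intro j t
    have := hasDerivAt_weight A 1 j t
    simpa [hf, hE, Matrix.one_mul] using this
  have hf_cont : ∀ j, Continuous (f j) := fun j =>
    continuous_iff_continuousAt.2 fun t => (hf_deriv j t).continuousAt
  have hf_nonneg : ∀ j s, 0 ≤ s → 0 ≤ f j s := fun j s hs =>
    Finset.sum_nonneg fun i _ => hEnn s hs i j
  have hDnonpos : ∀ j s, 0 ≤ s → ∑ i, (A * E s) i j ≤ 0 := by
    intro j s hs
    have hswap : ∑ i, (A * E s) i j = ∑ k, (∑ i, A i k) * E s k j := by
      simp_rw [Matrix.mul_apply]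
      rw [Finset.sum_comm]
      simp_rw [Finset.sum_mul]
    rw [hswap]
    exact Finset.sum_nonpos fun k _ =>
      mul_nonpos_of_nonpos_of_nonneg (hcs k) (hEnn s hs k j)
  have hf_anti : ∀ j, AntitoneOn (f j) (Set.Ici 0) := by
    intro j
    apply antitoneOn_of_deriv_nonpos (convex_Ici 0) (hf_cont j).continuousOn
    · intro x hx
      exact (hf_deriv j x).differentiableAt.differentiableWithinAt
    · intro x hx
      rw [interior_Ici] at hx
      rw [(hf_deriv j x).deriv]
      exact hDnonpos j x (le_of_lt hx)
  have hf_zero : ∀ j, f j 0 = 1 := by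
    intro j
    simp [hf, hE0, Matrix.one_apply, Finset.sum_ite_eq]
  have hf_le_one : ∀ j s, 0 ≤ s → f j s ≤ 1 := by
    intro j s hs
    have := hf_anti j Set.self_mem_Ici hs hs
    rwa [hf_zero j] at this
  have hE_le_f : ∀ s, 0 ≤ s → ∀ i j, E s i j ≤ f j s := fun s hs i j =>
    Finset.single_le_sum (fun i' _ => hEnn s hs i' j) (Finset.mem_univ i)
  -- the function u
  set u : ℝ → ℝ := fun s => ∑ i, (A⁻¹ * E s) i ℓ with hu
  have hu_deriv : ∀ t, HasDerivAt u (f ℓ t) t := by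
    intro t
    have := hasDerivAt_weight A A⁻¹ ℓ t
    rwa [Matrix.nonsing_inv_mul A hdet, Matrix.one_mul] at this
  have hu_cont : Continuous u :=
    continuous_iff_continuousAt.2 fun t => (hu_deriv t).continuousAt
  have hu_mono : MonotoneOn u (Set.Ici 0) := by
    apply monotoneOn_of_deriv_nonneg (convex_Ici 0) hu_cont.continuousOn
    · intro x hx
      exact (hu_deriv x).differentiableAt.differentiableWithinAt
    · intro x hx
      rw [interior_Ici] at hx
      rw [(hu_deriv x).deriv]
      exact hf_nonneg ℓ x (le_of_lt hx)
  have hu0 : u 0 = ∑ i, A⁻¹ i ℓ := by simp [hu, hE0, Matrix.mul_one]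
  set C : ℝ := ∑ i, ∑ k, |A⁻¹ i k| with hC
  have hC0 : 0 ≤ C :=
    Finset.sum_nonneg fun _ _ => Finset.sum_nonneg fun _ _ => abs_nonneg _
  have hu_bound : ∀ s, 0 ≤ s → |u s| ≤ C * f ℓ s := by
    intro s hs
    calc |u s| ≤ ∑ i, |(A⁻¹ * E s) i ℓ| := Finset.abs_sum_le_sum_abs _ _
      _ ≤ ∑ i, ∑ k, |A⁻¹ i k| * E s k ℓ := by
          refine Finset.sum_le_sum fun i _ => ?_
          rw [Matrix.mul_apply]
          refine (Finset.abs_sum_le_sum_abs _ _).trans ?_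
          refine Finset.sum_le_sum fun k _ => ?_
          rw [abs_mul, abs_of_nonneg (hEnn s hs k ℓ)]
      _ ≤ ∑ i, ∑ k, |A⁻¹ i k| * f ℓ s := by
          refine Finset.sum_le_sum fun i _ => Finset.sum_le_sum fun k _ => ?_
          exact mul_le_mul_of_nonneg_left (hE_le_f s hs k ℓ) (abs_nonneg _)
      _ = C * f ℓ s := by rw [hC, Finset.sum_mul]; simp_rw [Finset.sum_mul]
  have hu_bound' : ∀ s, 0 ≤ s → |u s| ≤ C := fun s hs =>
    (hu_bound s hs).trans (by
      calc C * f ℓ s ≤ C * 1 := mul_le_mul_of_nonneg_left (hf_le_one ℓ s hs) hC0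
        _ = C := mul_one C)
  -- key inequality : t * f ℓ t ≤ u t - u 0 for t ≥ 0
  have hkey : ∀ s, 0 ≤ s → s * f ℓ s ≤ u s - u 0 := by
    intro s hs
    set c : ℝ := f ℓ s with hcdef
    have hmono : MonotoneOn (fun x => u x - x * c) (Set.Icc 0 s) := by
      apply monotoneOn_of_deriv_nonneg (convex_Icc 0 s)
      · exact (hu_cont.sub (continuous_id.mul continuous_const)).continuousOn
      · intro x hx
        exact ((hu_deriv x).sub (hasDerivAt_mul_const c)).differentiableAt.differentiableWithinAt
      · intro x hx
        rw [interior_Icc] at hx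
        rw [HasDerivAt.deriv (f := fun x => u x - x * c) ((hu_deriv x).sub (hasDerivAt_mul_const c))]
        have : c ≤ f ℓ x := hf_anti ℓ (Set.mem_Ici.2 hx.1.le) (Set.mem_Ici.2 hs) hx.2.le
        linarith
    by_cases hs0 : s = 0
    · subst hs0; simp
    · have hs' : 0 < s := lt_of_le_of_ne hs (Ne.symm hs0)
      have := hmono (Set.left_mem_Icc.2 hs) (Set.right_mem_Icc.2 hs) hs
      simp only [zero_mul, sub_zero] at this
      linarith
  -- f ℓ tends to 0 at infinity
  have hf_lim : Tendsto (f ℓ) atTop (nhds 0) := by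
    have h2C : Tendsto (fun s : ℝ => 2 * C / s) atTop (nhds 0) :=
      tendsto_const_nhds.div_atTop tendsto_id
    refine tendsto_of_tendsto_of_tendsto_of_le_of_le' tendsto_const_nhds h2C ?_ ?_
    · filter_upwards [eventually_ge_atTop (0:ℝ)] with s hs
      exact hf_nonneg ℓ s hs
    · filter_upwards [eventually_gt_atTop (0:ℝ)] with s hs
      have h1 := hkey s hs.le
      have h2 : u s - u 0 ≤ 2 * C := by
        have b1 := abs_le.1 (hu_bound' s hs.le)
        have b2 := abs_le.1 (hu_bound' 0 le_rfl)
        linarith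
      rw [le_div_iff₀ hs]
      nlinarith
  -- u tends to 0 at infinity
  have hu_lim : Tendsto u atTop (nhds 0) := by
    have : Tendsto (fun s => C * f ℓ s) atTop (nhds 0) := by
      simpa using hf_lim.const_mul C
    apply squeeze_zero_norm' _ this
    filter_upwards [eventually_ge_atTop (0:ℝ)] with s hs
    simpa [Real.norm_eq_abs] using hu_bound s hs
  have hu_nonpos : ∀ s, 0 ≤ s → u s ≤ 0 := by
    intro s hs
    refine ge_of_tendsto hu_lim ?_
    filter_upwards [eventually_ge_atTop s] with x hx
    exact hu_mono (Set.mem_Ici.2 hs) (Set.mem_Ici.2 (hs.trans hx)) hx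
  -- conclusion
  have h1 : t * f ℓ t ≤ -(u 0) := by
    have := hkey t ht.le
    have := hu_nonpos t ht.le
    linarith
  have h2 : E t ℓ' ℓ ≤ f ℓ t := hE_le_f t ht.le ℓ' ℓ
  have h3 : f ℓ t ≤ (-(∑ i, A⁻¹ i ℓ)) / t := by
    rw [le_div_iff₀ ht, ← hu0]
    linarith [h1]
  exact h2.trans h3

end Stmt12Aux


end Stmt12AuxSection

open NormedSpace in

/-- Let `L N` be Metzler matrices with nonpositive column sums, all
Hurwitz. Fix an index `ℓ` and `b : ℝ`, and suppose `-N^(2b) * e^⊤ (L N)⁻¹ e_ℓ → 0`.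
Then for every `ε > 0` and every index `ℓ'`, `N^b * (exp (N^(-b) * ε • L N)) ℓ' ℓ → 0`. -/
theorem stmt12 {n : ℕ} (L : ℕ → Matrix (Fin n) (Fin n) ℝ)
    (hMetzler : ∀ N, ∀ i j, i ≠ j → 0 ≤ L N i j)
    (hcol : ∀ N, ∀ j, ∑ i, L N i j ≤ 0)
    (hHurwitz : ∀ N, ∀ μ ∈ spectrum ℂ ((L N).map (Complex.ofReal : ℝ → ℂ)), μ.re < 0)
    (ℓ : Fin n) (b : ℝ)
    (hlim : Tendsto (fun N : ℕ => -((N : ℝ) ^ (2 * b) * ∑ i, (L N)⁻¹ i ℓ))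
      atTop (nhds 0)) :
    ∀ ε > (0 : ℝ), ∀ ℓ' : Fin n,
      Tendsto (fun N : ℕ => (N : ℝ) ^ b *
          NormedSpace.exp (((N : ℝ) ^ (-b) * ε) • L N) ℓ' ℓ)
        atTop (nhds 0) := by
  intro ε hε ℓ'
  have hdet : ∀ N, IsUnit (L N).det := by
    intro N
    by_contra h
    have hd0 : (L N).det = 0 := by
      by_contra hne
      exact h (isUnit_iff_ne_zero.2 hne)
    have h0 : (0 : ℂ) ∈ spectrum ℂ ((L N).map (Complex.ofReal : ℝ → ℂ)) := by
      rw [spectrum.zero_mem_iff, Matrix.isUnit_iff_isUnit_det]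
      have hdet2 : ((L N).map (Complex.ofReal : ℝ → ℂ)).det = ((L N).det : ℂ) := by
        exact (RingHom.map_det Complex.ofRealHom (L N)).symm
      rw [hdet2, hd0]
      simp
    have := hHurwitz N 0 h0
    norm_num at this
  have hub : ∀ᶠ N : ℕ in atTop,
      (N : ℝ) ^ b * NormedSpace.exp (((N : ℝ) ^ (-b) * ε) • L N) ℓ' ℓ ≤
        (-((N : ℝ) ^ (2 * b) * ∑ i, (L N)⁻¹ i ℓ)) / ε := by
    filter_upwards [eventually_ge_atTop 1] with N hN
    have hx0 : (0 : ℝ) < (N : ℝ) := by exact_mod_cast Nat.lt_of_lt_of_le Nat.zero_lt_one hN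
    have ht : (0 : ℝ) < (N : ℝ) ^ (-b) * ε :=
      mul_pos (Real.rpow_pos_of_pos hx0 _) hε
    have hk := Stmt12Aux.key (L N) (hMetzler N) (hcol N) (hdet N) ℓ ht ℓ'
    have hxb : (0 : ℝ) < (N : ℝ) ^ b := Real.rpow_pos_of_pos hx0 b
    calc (N : ℝ) ^ b * NormedSpace.exp (((N : ℝ) ^ (-b) * ε) • L N) ℓ' ℓ
        ≤ (N : ℝ) ^ b * ((-(∑ i, (L N)⁻¹ i ℓ)) / ((N : ℝ) ^ (-b) * ε)) :=
          mul_le_mul_of_nonneg_left hk hxb.le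
      _ = (-((N : ℝ) ^ (2 * b) * ∑ i, (L N)⁻¹ i ℓ)) / ε := by
          rw [Real.rpow_neg hx0.le, two_mul, Real.rpow_add hx0]
          rw [mul_div_assoc', div_eq_div_iff (by positivity) hε.ne']
          field_simp
  have hlb : ∀ᶠ N : ℕ in atTop,
      0 ≤ (N : ℝ) ^ b * NormedSpace.exp (((N : ℝ) ^ (-b) * ε) • L N) ℓ' ℓ := by
    filter_upwards [eventually_ge_atTop 1] with N hN
    have hx0 : (0 : ℝ) < (N : ℝ) := by exact_mod_cast Nat.lt_of_lt_of_le Nat.zero_lt_one hN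
    have ht : (0 : ℝ) ≤ (N : ℝ) ^ (-b) * ε :=
      (mul_pos (Real.rpow_pos_of_pos hx0 _) hε).le
    exact mul_nonneg (Real.rpow_nonneg hx0.le b)
      (Stmt12Aux.exp_smul_entry_nonneg (hMetzler N) ht ℓ' ℓ)
  have hlim' : Tendsto
      (fun N : ℕ => (-((N : ℝ) ^ (2 * b) * ∑ i, (L N)⁻¹ i ℓ)) / ε) atTop (nhds 0) := by
    simpa using hlim.div_const ε
  exact tendsto_of_tendsto_of_tendsto_of_le_of_le' tendsto_const_nhds hlim' hlb hub
end

section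
/- Fix N ≥ 1 and let x : [0,∞) → ℝ be differentiable with x(0) = 2 and x'(t) = −x(t)³ + 6·x(t)² − 11·x(t) + 6·(1 − e^{−N·t}) for all t ≥ 0. Then limsup_{t→∞} x(t) ≤ 1. -/
open Filter Set Topology

/-- Barrier lemma: if `g a ≤ c` and whenever `g t = c` (for `t ≥ a`) the derivative is
strictly negative, then `g t ≤ c` for all `t ≥ a`. -/
lemma stmt15_barrier_upper {g d : ℝ → ℝ} {a c : ℝ}
    (hg : ∀ t, a ≤ t → HasDerivAt g (d t) t)
    (hga : g a ≤ c)
    (hd : ∀ t, a ≤ t → g t = c → d t < 0) :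
    ∀ t, a ≤ t → g t ≤ c := by
  intro t₁ ht₁
  by_contra hcon
  push_neg at hcon
  have hat₁ : a < t₁ := by
    rcases eq_or_lt_of_le ht₁ with rfl | h
    · exact absurd hga (not_le.2 hcon)
    · exact h
  set S : Set ℝ := {t | t ∈ Icc a t₁ ∧ g t ≤ c} with hSdef
  have hSsub : S ⊆ Icc a t₁ := fun t ht => ht.1
  have hSne : S.Nonempty := ⟨a, ⟨le_rfl, ht₁⟩, hga⟩
  have hcont : ContinuousOn g (Icc a t₁) := fun t ht =>
    ((hg t ht.1).continuousAt).continuousWithinAt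
  have hSclosed : IsClosed S := by
    have hSeq : S = Icc a t₁ ∩ g ⁻¹' Iic c := rfl
    rw [hSeq]
    exact hcont.preimage_isClosed_of_isClosed isClosed_Icc isClosed_Iic
  have hScpt : IsCompact S := isCompact_Icc.of_isClosed_subset hSclosed hSsub
  have hsS : sSup S ∈ S := hScpt.sSup_mem hSne
  set s := sSup S with hs
  obtain ⟨⟨has, hst₁⟩, hgs⟩ := hsS
  have hslt : s < t₁ := by
    rcases eq_or_lt_of_le hst₁ with h | h
    · exact absurd (h ▸ hgs) (not_le.2 hcon)
    · exact h
  have hbdd : BddAbove S := ⟨t₁, fun t ht => ht.1.2⟩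
  -- in both cases we find `t ∈ S` with `s < t`, a contradiction
  suffices hsuff : ∃ t, s < t ∧ t ∈ S by
    obtain ⟨t, hst, htS⟩ := hsuff
    exact absurd (le_csSup hbdd htS) (not_le.2 hst)
  have hlt : ∀ᶠ t in 𝓝[>] s, t < t₁ :=
    eventually_nhdsWithin_of_eventually_nhds (eventually_lt_nhds hslt)
  rcases eq_or_lt_of_le hgs with hgsc | hgsc
  · -- g s = c : use the strictly negative derivative
    have hds : d s < 0 := hd s has hgsc
    have hslope : Tendsto (slope g s) (𝓝[≠] s) (𝓝 (d s)) :=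
      hasDerivAt_iff_tendsto_slope.1 (hg s has)
    have hneg : ∀ᶠ t in 𝓝[≠] s, slope g s t < 0 := hslope.eventually_lt_const hds
    have hneg' : ∀ᶠ t in 𝓝[>] s, slope g s t < 0 :=
      hneg.filter_mono (nhdsWithin_mono s fun t ht => ne_of_gt ht)
    obtain ⟨t, ⟨hts, htlt⟩, htmem⟩ :=
      ((hneg'.and hlt).and eventually_mem_nhdsWithin).exists
    have hst : s < t := htmem
    have hgt : g t < g s := by
      rw [slope_def_field, div_neg_iff] at hts
      rcases hts with ⟨h1, h2⟩ | ⟨h1, h2⟩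
      · linarith
      · linarith
    exact ⟨t, hst, ⟨⟨le_trans has hst.le, htlt.le⟩, by linarith [hgt, hgsc.le]⟩⟩
  · -- g s < c : use continuity
    have hcontAt : ContinuousAt g s := (hg s has).continuousAt
    have hev : ∀ᶠ t in 𝓝 s, g t < c := hcontAt.eventually_lt_const hgsc
    have hev' : ∀ᶠ t in 𝓝[>] s, g t < c := eventually_nhdsWithin_of_eventually_nhds hev
    obtain ⟨t, ⟨hgt, htlt⟩, htmem⟩ :=
      ((hev'.and hlt).and eventually_mem_nhdsWithin).exists
    have hst : s < t := htmem
    exact ⟨t, hst, ⟨⟨le_trans has hst.le, htlt.le⟩, hgt.le⟩⟩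

/-- Lower barrier (applied to `-g`). -/
lemma stmt15_barrier_lower {g d : ℝ → ℝ} {a c : ℝ}
    (hg : ∀ t, a ≤ t → HasDerivAt g (d t) t)
    (hga : c ≤ g a)
    (hd : ∀ t, a ≤ t → g t = c → 0 < d t) :
    ∀ t, a ≤ t → c ≤ g t := by
  have := stmt15_barrier_upper (g := fun t => -g t) (d := fun t => -d t) (a := a) (c := -c)
    (fun t ht => (hg t ht).neg) (by simpa using hga)
    (fun t ht hgt => by
      have hgt' : -g t = -c := hgt
      have : g t = c := by linarith
      simpa using hd t ht this)
  intro t ht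
  have h' : -g t ≤ -c := this t ht
  linarith

/-- The cubic bound: for `1 + ε ≤ y ≤ c₁ < 2`,
`-y^3 + 6y^2 - 11y + 6 ≤ -ε * (2 - c₁)`. -/
lemma stmt15_cubic_bound {ε c₁ y : ℝ} (hε : 0 < ε) (hc₁ : c₁ < 2)
    (h1 : 1 + ε ≤ y) (h2 : y ≤ c₁) :
    -y ^ 3 + 6 * y ^ 2 - 11 * y + 6 ≤ -(ε * (2 - c₁)) := by
  nlinarith [mul_le_mul (by linarith : ε ≤ y - 1) (by linarith : 2 - c₁ ≤ 2 - y)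
      (by linarith) (by linarith), sq_nonneg (y - 1), sq_nonneg (2 - y),
    mul_pos hε (by linarith : (0:ℝ) < 2 - c₁)]

/-- Fix `N ≥ 1` and let `x : ℝ → ℝ` satisfy `x 0 = 2` and
`x' t = -x t ^ 3 + 6 * x t ^ 2 - 11 * x t + 6 * (1 - e^(-N * t))` for all `t ≥ 0`.
Then `limsup_{t → ∞} x t ≤ 1`. -/
theorem stmt15 (N : ℝ) (hN : 1 ≤ N) (x : ℝ → ℝ) (hx0 : x 0 = 2)
    (hx : ∀ t : ℝ, 0 ≤ t →
      HasDerivAt x (-(x t) ^ 3 + 6 * (x t) ^ 2 - 11 * x t + 6 * (1 - Real.exp (-N * t))) t) :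
    limsup x atTop ≤ 1 := by
  set d : ℝ → ℝ := fun t => -(x t) ^ 3 + 6 * (x t) ^ 2 - 11 * x t + 6 * (1 - Real.exp (-N * t))
    with hdd
  have hx' : ∀ t, 0 ≤ t → HasDerivAt x (d t) t := hx
  -- lower bound: `x t ≥ -1` for all `t ≥ 0`
  have hlow : ∀ t, 0 ≤ t → -1 ≤ x t := by
    refine stmt15_barrier_lower hx' (by rw [hx0]; norm_num) ?_
    intro t ht hxt
    have hexp : Real.exp (-N * t) ≤ 1 := Real.exp_le_one_iff.2 (by nlinarith)
    have : d t = -(-1 : ℝ) ^ 3 + 6 * (-1 : ℝ) ^ 2 - 11 * (-1 : ℝ) + 6 * (1 - Real.exp (-N * t)) := by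
      rw [hdd]; simp only [hxt]
    rw [this]
    nlinarith
  have main : ∀ ε : ℝ, 0 < ε → ε ≤ 1 / 2 → ∀ᶠ t in atTop, x t ≤ 1 + ε := by
    intro ε hε hε2
    -- derivative at time 0 is `-6`
    have h0 : HasDerivAt x (-6) 0 := by
      have h := hx 0 le_rfl
      rw [hx0] at h
      norm_num at h
      exact h
    -- find `t₀ > 0` with `x t₀ < 2`
    have hslope : Tendsto (slope x 0) (𝓝[≠] 0) (𝓝 (-6)) := hasDerivAt_iff_tendsto_slope.1 h0
    have hneg : ∀ᶠ t in 𝓝[>] (0 : ℝ), slope x 0 t < 0 :=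
      (hslope.eventually_lt_const (by norm_num)).filter_mono
        (nhdsWithin_mono 0 fun t ht => ne_of_gt ht)
    obtain ⟨t₀, hst₀, ht₀mem⟩ := (hneg.and eventually_mem_nhdsWithin).exists
    have ht₀ : 0 < t₀ := ht₀mem
    have hxt₀ : x t₀ < 2 := by
      rw [slope_def_field, hx0] at hst₀
      rw [div_neg_iff] at hst₀
      rcases hst₀ with ⟨h1, h2⟩ | ⟨h1, h2⟩ <;> linarith
    set c₁ : ℝ := max (x t₀) (1 + ε) with hc₁def
    have hc₁lt : c₁ < 2 := max_lt hxt₀ (by linarith)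
    have hc₁ge : 1 + ε ≤ c₁ := le_max_right _ _
    have hxc₁ : x t₀ ≤ c₁ := le_max_left _ _
    set m : ℝ := ε * (2 - c₁) with hmdef
    have hm : 0 < m := mul_pos hε (by linarith)
    -- barrier at `c₁` from time `t₀`
    have hbar1 : ∀ t, t₀ ≤ t → x t ≤ c₁ := by
      refine stmt15_barrier_upper (fun t ht => hx' t (le_trans ht₀.le ht)) hxc₁ ?_
      intro t ht hxt
      have hb := stmt15_cubic_bound hε hc₁lt hc₁ge le_rfl
      have hdt : d t = -c₁ ^ 3 + 6 * c₁ ^ 2 - 11 * c₁ + 6 * (1 - Real.exp (-N * t)) := by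
        rw [hdd]; simp only [hxt]
      rw [hdt]
      nlinarith [Real.exp_pos (-N * t)]
    -- the solution reaches the level `1 + ε`
    have hreach : ∃ t₁, t₀ ≤ t₁ ∧ x t₁ ≤ 1 + ε := by
      by_contra hcon
      push_neg at hcon
      set T : ℝ := t₀ + (c₁ + 2) / m with hT
      have hTt₀ : t₀ ≤ T := by
        have h0' : 0 ≤ (c₁ + 2) / m := div_nonneg (by linarith) hm.le
        rw [hT]
        linarith
      have hderivφ : ∀ t, t₀ ≤ t →
          HasDerivAt (fun t => x t + m * t) (d t + m * 1) t := fun t ht =>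
        (hx' t (le_trans ht₀.le ht)).add ((hasDerivAt_id t).const_mul m)
      have hanti : AntitoneOn (fun t => x t + m * t) (Icc t₀ T) := by
        apply antitoneOn_of_deriv_nonpos (convex_Icc _ _)
        · intro t htI
          exact ((hderivφ t htI.1).continuousAt).continuousWithinAt
        · intro t htI
          rw [interior_Icc] at htI
          exact (hderivφ t htI.1.le).differentiableAt.differentiableWithinAt
        · intro t htI
          rw [interior_Icc] at htI
          rw [(hderivφ t htI.1.le).deriv]
          have h1 : 1 + ε ≤ x t := (hcon t htI.1.le).le
          have h2 : x t ≤ c₁ := hbar1 t htI.1.le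
          have hb := stmt15_cubic_bound hε hc₁lt h1 h2
          have hdt : d t = -(x t) ^ 3 + 6 * (x t) ^ 2 - 11 * x t + 6 * (1 - Real.exp (-N * t)) := by
            rw [hdd]
          rw [hdt]
          nlinarith [Real.exp_pos (-N * t)]
      have hle := hanti (left_mem_Icc.2 hTt₀) (right_mem_Icc.2 hTt₀) hTt₀
      simp only at hle
      have hmT : m * T = m * t₀ + (c₁ + 2) := by
        rw [hT, mul_add, mul_div_cancel₀ _ (ne_of_gt hm)]
      have hxT : x T ≤ -2 := by linarith
      have := hcon T hTt₀
      linarith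
    obtain ⟨t₁, ht₁t₀, hxt₁⟩ := hreach
    -- barrier at `1 + ε` from time `t₁`
    have hbar2 : ∀ t, t₁ ≤ t → x t ≤ 1 + ε := by
      refine stmt15_barrier_upper
        (fun t ht => hx' t (le_trans (le_trans ht₀.le ht₁t₀) ht)) hxt₁ ?_
      intro t ht hxt
      have hb := stmt15_cubic_bound hε hc₁lt le_rfl hc₁ge
      have hdt : d t = -(1 + ε) ^ 3 + 6 * (1 + ε) ^ 2 - 11 * (1 + ε) + 6 * (1 - Real.exp (-N * t)) := by
        rw [hdd]; simp only [hxt]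
      rw [hdt]
      nlinarith [Real.exp_pos (-N * t)]
    exact eventually_atTop.2 ⟨t₁, hbar2⟩
  -- conclude
  have hcob : IsCoboundedUnder (· ≤ ·) atTop x :=
    isCoboundedUnder_le_of_eventually_le atTop (x := -1) (eventually_atTop.2 ⟨0, hlow⟩)
  refine le_of_forall_pos_le_add fun ε hε => ?_
  have h1 : limsup x atTop ≤ 1 + min ε (1 / 2) :=
    limsup_le_of_le hcob (main _ (lt_min hε (by norm_num)) (min_le_right _ _))
  have h2 : min ε (1 / 2) ≤ ε := min_le_left _ _
  linarith
end
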